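/- (Key claim in the proof of Theorem 1) Let x, y ∈ ℤ × ℤ be unimodular pairs with |det(x,y)| ≥ 2 and fix ε ∈ {+1, −1}. Let p be a consistent path of sign ε from x to y whose length is minimal among all consistent paths of sign ε from x to y, and let q be any consistent path of sign ε from x to y. Then every vertex of p equals, up to sign, some vertex of q; that is, for each vertex z of p, either z or −z occurs as a vertex of q. -/

import Mathlib

/-- The determinant of two integer vectors in the plane. -/
def det (x y : ℤ × ℤ) : ℤ := x.1 * y.2 - x.2 * y.1

/-- A path of length `n` from `x` to `y` in the distant graph of `P(ℤ)`, given by its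
sequence of vertices `z 0 = x, …, z n = y`: all vertices are unimodular pairs,
consecutive vertices are distant (`|det| = 1`), and distinct indices give distinct
projective points (`z i ≠ ± z j`). -/
def IsPath (x y : ℤ × ℤ) (n : ℕ) (z : ℕ → ℤ × ℤ) : Prop :=
  z 0 = x ∧ z n = y ∧
  (∀ i, i ≤ n → Int.gcd (z i).1 (z i).2 = 1) ∧
  (∀ i, i < n → |det (z i) (z (i + 1))| = 1) ∧
  (∀ i j, i ≤ n → j ≤ n → i ≠ j → z i ≠ z j ∧ z i ≠ -z j)

/-- A consistent path of sign `ε` from `x` to `y`: a path all of whose intermediate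
vertices `z i = α • x + β • y` (coefficients over `ℚ`) satisfy `ε * α * β > 0`, i.e. they
all lie in the same pair of opposite open cones determined by `x` and `y`. -/
def IsConsistentPath (x y : ℤ × ℤ) (ε : ℚ) (n : ℕ) (z : ℕ → ℤ × ℤ) : Prop :=
  IsPath x y n z ∧
  ∀ i, 0 < i → i < n → ∃ α β : ℚ,
    ((z i).1 : ℚ) = α * x.1 + β * y.1 ∧ ((z i).2 : ℚ) = α * x.2 + β * y.2 ∧
    ε * (α * β) > 0

lemma det_swap (z w : ℤ × ℤ) : det z w = - det w z := by unfold det; ring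

lemma det_neg_left (z w : ℤ × ℤ) : det (-z) w = - det z w := by
  unfold det; simp; ring

lemma det_neg_right (z w : ℤ × ℤ) : det z (-w) = - det z w := by
  unfold det; simp; ring

lemma det_expand (p q z : ℤ × ℤ) :
    det p q * z.1 = det z q * p.1 + det p z * q.1 ∧
    det p q * z.2 = det z q * p.2 + det p z * q.2 := by
  constructor <;> (unfold det; ring)

lemma det_mul_det (p q z w : ℤ × ℤ) :
    det p q * det z w = det z q * det p w - det w q * det p z := by
  unfold det; ring

lemma gcd_dvd_det_left (z w : ℤ × ℤ) : (Int.gcd z.1 z.2 : ℤ) ∣ det z w := by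
  unfold det
  exact dvd_sub (Dvd.dvd.mul_right (Int.gcd_dvd_left _ _) _)
    (Dvd.dvd.mul_right (Int.gcd_dvd_right _ _) _)

lemma unimod_left_of_abs_det (z w : ℤ × ℤ) (h : |det z w| = 1) :
    Int.gcd z.1 z.2 = 1 := by
  have h1 : (Int.gcd z.1 z.2 : ℤ) ∣ det z w := gcd_dvd_det_left z w
  have h2 : (Int.gcd z.1 z.2 : ℤ) ∣ 1 := by
    rcases abs_eq (by norm_num : (0:ℤ) ≤ 1) |>.mp h with h' | h'
    · rwa [h'] at h1
    · rw [h'] at h1; exact (dvd_neg).mp h1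
  have h3 : (Int.gcd z.1 z.2 : ℤ) = 1 := Int.eq_one_of_dvd_one (by positivity) h2
  exact_mod_cast h3

lemma unimod_right_of_abs_det (z w : ℤ × ℤ) (h : |det z w| = 1) :
    Int.gcd w.1 w.2 = 1 := by
  apply unimod_left_of_abs_det w z
  rw [det_swap, abs_neg]; exact h

/-- Two parallel unimodular vectors agree up to sign. -/
lemma eq_or_neg_of_det_eq_zero (z w : ℤ × ℤ) (hz : Int.gcd z.1 z.2 = 1)
    (hw : Int.gcd w.1 w.2 = 1) (h : det z w = 0) : w = z ∨ w = -z := by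
  obtain ⟨s, t, hst⟩ := (Int.isCoprime_iff_gcd_eq_one).mpr hz
  have hd : z.1 * w.2 - z.2 * w.1 = 0 := h
  have h1 : w.1 = (s * w.1 + t * w.2) * z.1 := by linear_combination (-w.1) * hst - t * hd
  have h2 : w.2 = (s * w.1 + t * w.2) * z.2 := by linear_combination (-w.2) * hst + s * hd
  have hgc : Int.gcd ((s * w.1 + t * w.2) * z.1) ((s * w.1 + t * w.2) * z.2) = 1 := by
    rw [← h1, ← h2]; exact hw
  rw [Int.gcd_mul_left, hz, mul_one] at hgc
  have hc : s * w.1 + t * w.2 = 1 ∨ s * w.1 + t * w.2 = -1 := by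
    rcases Int.natAbs_eq (s * w.1 + t * w.2) with h' | h' <;> omega
  rcases hc with hc | hc <;> rw [hc] at h1 h2
  · left; ext <;> simp [h1, h2]
  · right; ext <;> simp [h1, h2]

/-- Core sign-step lemma: a distant step cannot jump between the two open sides. -/
lemma step_sign (m k m' k' : ℤ) (hprod : (m * k) * (m' * k') < 0)
    (hstep : |m * k' - m' * k| = 1) : False := by
  have h2 : (m * k') * (m' * k) < 0 := by nlinarith
  rcases mul_neg_iff.mp h2 with ⟨hA, hB⟩ | ⟨hA, hB⟩ <;>
    rcases (abs_eq (by norm_num : (0:ℤ) ≤ 1)).mp hstep with h' | h' <;>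
  · set A := m * k'; set B := m' * k; omega

/-- Characterization of the consistency condition in integer terms. -/
lemma consis_char (x y z : ℤ × ℤ) (hd : det x y ≠ 0) (ε : ℚ) (ε' : ℤ)
    (hεε' : ε = (ε' : ℚ)) :
    (∃ α β : ℚ, ((z.1 : ℚ) = α * x.1 + β * y.1) ∧ ((z.2 : ℚ) = α * x.2 + β * y.2) ∧
      ε * (α * β) > 0) ↔ 0 < ε' * (det z y * det x z) := by
  have hdq : ((det x y : ℤ) : ℚ) ≠ 0 := Int.cast_ne_zero.mpr hd
  have key1 : ((det x y : ℤ) : ℚ) * z.1 = (det z y : ℚ) * x.1 + (det x z : ℚ) * y.1 := by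
    exact_mod_cast (det_expand x y z).1
  have key2 : ((det x y : ℤ) : ℚ) * z.2 = (det z y : ℚ) * x.2 + (det x z : ℚ) * y.2 := by
    exact_mod_cast (det_expand x y z).2
  constructor
  · rintro ⟨α, β, h1, h2, h3⟩
    have hα : α * (det x y : ℚ) = (det z y : ℚ) := by
      unfold det; push_cast
      linear_combination (y.1 : ℚ) * h2 - (y.2 : ℚ) * h1
    have hβ : β * (det x y : ℚ) = (det x z : ℚ) := by
      unfold det; push_cast
      linear_combination (x.2 : ℚ) * h1 - (x.1 : ℚ) * h2
    have h4 : (0 : ℚ) < ε * (α * β) * ((det x y : ℚ))^2 := by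
      apply mul_pos h3
      positivity
    have h5 : ε * (α * β) * ((det x y : ℚ))^2
        = (ε' : ℚ) * ((det z y : ℚ) * (det x z : ℚ)) := by
      rw [hεε']
      linear_combination (ε' : ℚ) * β * (det x y : ℚ) * hα + (ε' : ℚ) * (det z y : ℚ) * hβ
    rw [h5] at h4
    exact_mod_cast h4
  · intro h
    refine ⟨(det z y : ℚ) / (det x y : ℚ), (det x z : ℚ) / (det x y : ℚ), ?_, ?_, ?_⟩
    · field_simp
      linear_combination key1
    · field_simp
      linear_combination key2
    · rw [hεε', div_mul_div_comm]
      apply mul_pos_iff.mpr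
      have hpos : (0 : ℚ) < ((det x y : ℚ)) * (det x y : ℚ) := by
        rcases hdq.lt_or_gt with h' | h'
        · exact mul_pos_of_neg_of_neg h' h'
        · exact mul_pos h' h'
      have hnum : (0 : ℚ) < (ε' : ℚ) * ((det z y : ℚ) * (det x z : ℚ)) := by
        exact_mod_cast h
      rcases mul_pos_iff.mp hnum with ⟨he, hn⟩ | ⟨he, hn⟩
      · left; exact ⟨he, div_pos hn hpos⟩
      · right; exact ⟨he, div_neg_of_neg_of_pos hn hpos⟩

/-- Every consistent path from `x` to `y` passes (up to sign) through any vertex `v`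
having a distant partner `u` on the wrong side of the cone. -/
lemma mandatory_mem (x y : ℤ × ℤ) (ε' : ℤ) (nq : ℕ) (q : ℕ → ℤ × ℤ)
    (hq0 : q 0 = x) (hqn : q nq = y)
    (hqu : ∀ i, i ≤ nq → Int.gcd (q i).1 (q i).2 = 1)
    (hqd : ∀ i, i < nq → |det (q i) (q (i + 1))| = 1)
    (hqc : ∀ i, 0 < i → i < nq → 0 < ε' * (det (q i) y * det x (q i)))
    (v u : ℤ × ℤ) (huv : |det v u| = 1)
    (hv : 0 < ε' * (det v y * det x v))
    (hu : ε' * (det u y * det x u) < 0) :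
    ∃ j, 0 < j ∧ j < nq ∧ (q j = v ∨ q j = -v) := by
  classical
  set m : ℕ → ℤ := fun j => det (q j) u with hm
  set k : ℕ → ℤ := fun j => det v (q j) with hk
  have hPQ : (det v y * det x v) * (det u y * det x u) < 0 := by nlinarith [mul_pos hv (neg_pos.mpr hu), sq_nonneg ε']
  have hτn : (m 0 * k 0) * (m nq * k nq) < 0 := by
    have e1 : m 0 * k 0 = -(det x u * det x v) := by
      simp only [hm, hk, hq0]
      rw [det_swap v x]; ring
    have e2 : m nq * k nq = -(det u y * det v y) := by
      simp only [hm, hk, hqn]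
      rw [det_swap y u]; ring
    rw [e1, e2]; nlinarith
  have hne0 : m 0 * k 0 ≠ 0 := by
    intro h; rw [h] at hτn; simp at hτn
  have hτ0 : 0 < (m 0 * k 0) * (m 0 * k 0) := mul_self_pos.mpr hne0
  have hPex : ∃ j, (m 0 * k 0) * (m j * k j) ≤ 0 := ⟨nq, le_of_lt hτn⟩
  set j₀ := Nat.find hPex with hj₀def
  have hj₀ : (m 0 * k 0) * (m j₀ * k j₀) ≤ 0 := Nat.find_spec hPex
  have hj₀le : j₀ ≤ nq := Nat.find_min' hPex (le_of_lt hτn)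
  have hj₀pos : 0 < j₀ := by
    rcases Nat.eq_zero_or_pos j₀ with h | h
    · rw [h] at hj₀; linarith
    · exact h
  have hprev : 0 < (m 0 * k 0) * (m (j₀ - 1) * k (j₀ - 1)) := by
    have := Nat.find_min hPex (show j₀ - 1 < j₀ by omega)
    linarith
  by_cases hmk : m j₀ * k j₀ = 0
  · -- hit the boundary
    have hj₀lt : j₀ < nq := by
      rcases lt_or_eq_of_le hj₀le with h | h
      · exact h
      · exfalso; rw [h] at hmk; rw [hmk] at hτn; simp at hτn
    rcases mul_eq_zero.mp hmk with h0 | h0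
    · -- q j₀ = ± u : contradicts consistency
      exfalso
      have huu : Int.gcd u.1 u.2 = 1 := unimod_right_of_abs_det v u huv
      have hqj : u = q j₀ ∨ u = -(q j₀) :=
        eq_or_neg_of_det_eq_zero (q j₀) u (hqu j₀ hj₀le) huu h0
      have hcons := hqc j₀ hj₀pos hj₀lt
      have : det (q j₀) y * det x (q j₀) = det u y * det x u := by
        rcases hqj with h | h
        · rw [h]
        · have : q j₀ = -u := by rw [← neg_neg (q j₀), ← h]
          rw [this, det_neg_left, det_neg_right]; ring
      rw [this] at hcons
      linarith
    · -- q j₀ = ± v : done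
      have hvv : Int.gcd v.1 v.2 = 1 := unimod_left_of_abs_det v u huv
      have hqj : q j₀ = v ∨ q j₀ = -v :=
        eq_or_neg_of_det_eq_zero v (q j₀) hvv (hqu j₀ hj₀le) h0
      exact ⟨j₀, hj₀pos, hj₀lt, hqj⟩
  · -- a forbidden crossing step: contradiction
    exfalso
    have hτneg : (m 0 * k 0) * (m j₀ * k j₀) < 0 :=
      lt_of_le_of_ne hj₀ (mul_ne_zero hne0 hmk)
    have hsp : (m (j₀ - 1) * k (j₀ - 1)) * (m j₀ * k j₀) < 0 := by nlinarith
    have hcross : |m (j₀ - 1) * k j₀ - m j₀ * k (j₀ - 1)| = 1 := by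
      have hid : m (j₀ - 1) * k j₀ - m j₀ * k (j₀ - 1)
          = det v u * det (q (j₀ - 1)) (q j₀) := by
        rw [det_mul_det v u (q (j₀ - 1)) (q j₀)]
      have hstep : |det (q (j₀ - 1)) (q j₀)| = 1 := by
        have h1 : j₀ - 1 < nq := by omega
        have h2 : j₀ - 1 + 1 = j₀ := by omega
        have := hqd (j₀ - 1) h1
        rwa [h2] at this
      rw [hid, abs_mul, huv, hstep]; norm_num
    exact step_sign _ _ _ _ hsp hcross

lemma det_self (z : ℤ × ℤ) : det z z = 0 := by unfold det; ring

/-- Core construction: for `det x y = N + 1 ≥ 1` there is a "continued fraction"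
consistent path from `x` to `y` all of whose interior vertices are mandatory. -/
lemma cons_core (N : ℕ) : ∀ x y : ℤ × ℤ, Int.gcd x.1 x.2 = 1 → Int.gcd y.1 y.2 = 1 →
    det x y = (N : ℤ) + 1 →
    ∃ n : ℕ, ∃ v : ℕ → ℤ × ℤ, 0 < n ∧ v 0 = x ∧ v n = y ∧
    (∀ i, i ≤ n → Int.gcd (v i).1 (v i).2 = 1) ∧
    (∀ i, i < n → det (v i) (v (i + 1)) = 1) ∧
    (∀ i j, i < j → j ≤ n → det x (v i) < det x (v j)) ∧
    (∀ i, 0 < i → i < n → 0 < det (v i) y) ∧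
    (∀ i, 0 < i → i < n →
      ∃ u, |det (v i) u| = 1 ∧ det u y < 0 ∧ 0 < det x u ∧ det x u < det x y) := by
  induction N using Nat.strong_induction_on with
  | _ N ih =>
  intro x y hx hy hdet
  rcases Nat.eq_zero_or_pos N with rfl | hNpos
  · -- base case : det x y = 1, take the path x, y
    refine ⟨1, fun i => if i = 0 then x else y, one_pos, by simp, by simp, ?_, ?_, ?_, ?_, ?_⟩
    · intro i hi
      by_cases h : i = 0 <;> simp [h, hx, hy]
    · intro i hi
      have : i = 0 := by omega
      simp [this, hdet]
    · intro i j hij hj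
      have : i = 0 ∧ j = 1 := by omega
      rcases this with ⟨rfl, rfl⟩
      simp [det_self, hdet]
    · intro i h1 h2; omega
    · intro i h1 h2; omega
  · -- inductive step : det x y = N + 1 ≥ 2
    have hd2 : 2 ≤ det x y := by omega
    have hd0 : det x y ≠ 0 := by omega
    obtain ⟨s, t, hst⟩ := (Int.isCoprime_iff_gcd_eq_one).mpr hy
    set w : ℤ × ℤ := (-t, s) with hw
    have hyw : det y w = 1 := by
      unfold det; simp [hw]; linear_combination hst
    have e1 : x.1 = det x w * y.1 - det x y * w.1 := by
      have h := (det_expand y w x).1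
      rw [hyw, one_mul] at h
      have hs := det_swap y x
      linear_combination h + w.1 * hs
    have e2 : x.2 = det x w * y.2 - det x y * w.2 := by
      have h := (det_expand y w x).2
      rw [hyw, one_mul] at h
      have hs := det_swap y x
      linear_combination h + w.2 * hs
    obtain ⟨b₀, e, hb₀0, hb₀d, hce⟩ :
        ∃ b₀ e : ℤ, 0 ≤ b₀ ∧ b₀ < det x y ∧ det x w + b₀ = det x y * e := by
      refine ⟨(-(det x w)) % det x y, -((-(det x w)) / det x y), Int.emod_nonneg _ hd0,
        Int.emod_lt_of_pos _ (by omega), ?_⟩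
      have h := Int.emod_add_mul_ediv (-(det x w)) (det x y)
      linear_combination h
    obtain ⟨z', hdz1, hdz2⟩ : ∃ z' : ℤ × ℤ,
        det x y * z'.1 = x.1 + b₀ * y.1 ∧ det x y * z'.2 = x.2 + b₀ * y.2 := by
      refine ⟨(e * y.1 - w.1, e * y.2 - w.2), ?_, ?_⟩
      · simp only
        linear_combination (-y.1) * hce - e1
      · simp only
        linear_combination (-y.2) * hce - e2
    have hb₀1 : 1 ≤ b₀ := by
      rcases eq_or_lt_of_le hb₀0 with h | h
      · exfalso
        have hdvd : det x y ∣ (Int.gcd x.1 x.2 : ℤ) := by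
          apply Int.dvd_coe_gcd
          · exact ⟨z'.1, by linear_combination -hdz1 + y.1 * h⟩
          · exact ⟨z'.2, by linear_combination -hdz2 + y.2 * h⟩
        rw [hx] at hdvd
        have := Int.le_of_dvd (by norm_num) hdvd
        omega
      · omega
    have ha : det z' y = 1 := by
      apply mul_left_cancel₀ hd0
      have expand : det x y * det z' y = (det x y * z'.1) * y.2 - (det x y * z'.2) * y.1 := by
        unfold det; ring
      rw [hdz1, hdz2] at expand
      rw [expand, mul_one]; unfold det; ring
    have hb : det x z' = b₀ := by
      apply mul_left_cancel₀ hd0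
      have expand : det x y * det x z' = x.1 * (det x y * z'.2) - x.2 * (det x y * z'.1) := by
        unfold det; ring
      rw [hdz1, hdz2] at expand
      rw [expand]; unfold det; ring
    have hz'u : Int.gcd z'.1 z'.2 = 1 :=
      unimod_left_of_abs_det z' y (by rw [ha]; norm_num)
    have conv : ∀ z : ℤ × ℤ, b₀ * det z y = det x y * det z z' + det x z := by
      intro z
      have expand : det x y * det z z' = z.1 * (det x y * z'.2) - z.2 * (det x y * z'.1) := by
        unfold det; ring
      rw [hdz1, hdz2] at expand
      rw [expand]; unfold det; ring
    -- apply the induction hypothesis to the pair (x, z')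
    obtain ⟨n', v', hn'pos, h0', hn', hu', hd', hmono', hpos', hpart'⟩ :=
      ih (b₀.toNat - 1) (by omega) x z' hx hz'u (by rw [hb]; omega)
    rw [hb] at hpart'
    refine ⟨n' + 1, fun i => if i ≤ n' then v' i else y, by omega, ?_, ?_, ?_, ?_, ?_, ?_, ?_⟩
    · simp [h0']
    · simp
    · intro i hi
      by_cases h : i ≤ n'
      · simpa [h] using hu' i h
      · simp [h, hy]
    · intro i hi
      by_cases h : i < n'
      · have h1 : i ≤ n' := by omega
        have h2 : i + 1 ≤ n' := by omega
        simpa [h1, h2] using hd' i h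
      · have h1 : i = n' := by omega
        subst h1
        simp [hn', ha, Nat.lt_irrefl]
    · intro i j hij hj
      by_cases h : j ≤ n'
      · have h1 : i ≤ n' := by omega
        simpa [h, h1] using hmono' i j hij h
      · have h1 : j = n' + 1 := by omega
        have h2 : i ≤ n' := by omega
        subst h1
        have hilt : det x (v' i) ≤ b₀ := by
          rcases eq_or_lt_of_le h2 with h3 | h3
          · rw [h3, hn', hb]
          · have := hmono' i n' h3 le_rfl
            rw [hn', hb] at this
            omega
        simp only [h2, if_pos, if_neg (by omega : ¬ n' + 1 ≤ n')]
        omega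
    · intro i h1 h2
      have h3 : i ≤ n' := by omega
      simp only [h3, if_pos]
      by_cases h : i < n'
      · have hc := conv (v' i)
        have hp1 : 0 < det (v' i) z' := hpos' i h1 h
        have hp2 : 0 < det x (v' i) := by
          have := hmono' 0 i h1 (by omega)
          rw [h0', det_self] at this
          exact this
        nlinarith
      · have h4 : i = n' := by omega
        subst h4
        rw [hn', ha]
        norm_num
    · intro i h1 h2
      have h3 : i ≤ n' := by omega
      simp only [h3, if_pos]
      by_cases h : i < n'
      · obtain ⟨u, huvd, hu1, hu2, hu3⟩ := hpart' i h1 h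
        refine ⟨u, huvd, ?_, hu2, by omega⟩
        have hc := conv u
        nlinarith
      · have h4 : i = n' := by omega
        subst h4
        rw [hn']
        refine ⟨(y.1 - z'.1, y.2 - z'.2), ?_, ?_, ?_, ?_⟩
        · have : det z' (y.1 - z'.1, y.2 - z'.2) = det z' y := by unfold det; simp; ring
          rw [this, ha]; norm_num
        · have : det (y.1 - z'.1, y.2 - z'.2) y = -det z' y := by unfold det; simp; ring
          rw [this, ha]; norm_num
        · have : det x (y.1 - z'.1, y.2 - z'.2) = det x y - det x z' := by
            unfold det; simp; ring
          rw [this, hb]; omega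
        · have : det x (y.1 - z'.1, y.2 - z'.2) = det x y - det x z' := by
            unfold det; simp; ring
          rw [this, hb]; omega

lemma gcd_neg_pair (z : ℤ × ℤ) : Int.gcd (-z).1 (-z).2 = Int.gcd z.1 z.2 := by
  simp [Int.gcd]

lemma pm_trans (A B C D : ℤ × ℤ) (h1 : A = B ∨ A = -B) (h2 : C = D ∨ C = -D)
    (h3 : B ≠ D) (h4 : B ≠ -D) : A ≠ C ∧ A ≠ -C := by
  rcases h1 with rfl | rfl <;> rcases h2 with rfl | rfl <;> constructor <;> intro h <;>
    first
      | exact h3 (by simpa using h)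
      | exact h4 (by simpa using h)
      | exact h3 (by simpa using congrArg Neg.neg h)
      | exact h4 (by simpa using congrArg Neg.neg h)

lemma core_distinct (n : ℕ) (c : ℕ → ℤ × ℤ) (p : ℤ × ℤ) (h0 : c 0 = p)
    (hmono : ∀ i j, i < j → j ≤ n → det p (c i) < det p (c j)) :
    ∀ i j, i ≤ n → j ≤ n → i ≠ j → c i ≠ c j ∧ c i ≠ -c j := by
  intro i j hi hj hne
  have key : det p (c i) ≠ det p (c j) := by
    rcases Nat.lt_or_ge i j with h | h
    · exact ne_of_lt (hmono i j h hj)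
    · exact ne_of_gt (hmono j i (by omega) hi)
  have nonneg : ∀ a, a ≤ n → 0 ≤ det p (c a) := by
    intro a ha
    rcases Nat.eq_zero_or_pos a with rfl | h
    · rw [h0, det_self]
    · have := hmono 0 a h ha
      rw [h0, det_self] at this
      omega
  constructor
  · intro h; exact key (by rw [h])
  · intro h
    have h1 : det p (c i) = -det p (c j) := by rw [h, det_neg_right]
    have h2 := nonneg i hi
    have h3 := nonneg j hj
    exact key (by omega)

/-- For any of the four sign configurations, there is a consistent path whose interior
vertices are all mandatory. -/
lemma cons_all (x y : ℤ × ℤ) (hx : Int.gcd x.1 x.2 = 1) (hy : Int.gcd y.1 y.2 = 1)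
    (hdet : 2 ≤ |det x y|) (ε' : ℤ) (hε : ε' = 1 ∨ ε' = -1) :
    ∃ n : ℕ, ∃ v : ℕ → ℤ × ℤ, 0 < n ∧ v 0 = x ∧ v n = y ∧
    (∀ i, i ≤ n → Int.gcd (v i).1 (v i).2 = 1) ∧
    (∀ i, i < n → |det (v i) (v (i + 1))| = 1) ∧
    (∀ i j, i ≤ n → j ≤ n → i ≠ j → v i ≠ v j ∧ v i ≠ -v j) ∧
    (∀ i, 0 < i → i < n → 0 < ε' * (det (v i) y * det x (v i))) ∧
    (∀ i, 0 < i → i < n → ∃ u, |det (v i) u| = 1 ∧ ε' * (det u y * det x u) < 0) := by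
  have hsplit : 2 ≤ det x y ∨ det x y ≤ -2 := by
    rcases abs_cases (det x y) with ⟨h1, h2⟩ | ⟨h1, h2⟩ <;> omega
  have hyneg : Int.gcd (-y).1 (-y).2 = 1 := by rw [gcd_neg_pair]; exact hy
  have hxneg : Int.gcd (-x).1 (-x).2 = 1 := by rw [gcd_neg_pair]; exact hx
  rcases hε with rfl | rfl
  · rcases hsplit with hd | hd
    · -- ε = 1, det x y ≥ 2
      obtain ⟨n, c, hnpos, h0, hn, hu, hd1, hmono, hpos, hpart⟩ :=
        cons_core (det x y - 1).toNat x y hx hy (by omega)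
      have hdist := core_distinct n c x h0 hmono
      refine ⟨n, c, hnpos, h0, hn, hu, ?_, hdist, ?_, ?_⟩
      · intro i hi; rw [hd1 i hi]; norm_num
      · intro i h1 h2
        have ha := hpos i h1 h2
        have hb : 0 < det x (c i) := by
          have := hmono 0 i h1 (le_of_lt h2)
          rwa [h0, det_self] at this
        nlinarith
      · intro i h1 h2
        obtain ⟨u, h3, h4, h5, _⟩ := hpart i h1 h2
        exact ⟨u, h3, by nlinarith⟩
    · -- ε = 1, det x y ≤ -2 : use the reversed path for (y, x)
      obtain ⟨n, c, hnpos, h0, hn, hu, hd1, hmono, hpos, hpart⟩ :=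
        cons_core (det y x - 1).toNat y x hy hx (by have h2 := det_swap y x; omega)
      have hdist := core_distinct n c y h0 hmono
      refine ⟨n, fun i => c (n - i), hnpos, ?_, ?_, ?_, ?_, ?_, ?_, ?_⟩
      · show c (n - 0) = x; rw [Nat.sub_zero, hn]
      · show c (n - n) = y; rw [Nat.sub_self, h0]
      · intro i _; exact hu (n - i) (Nat.sub_le n i)
      · intro i hi
        show |det (c (n - i)) (c (n - (i + 1)))| = 1
        have hj1 : n - (i + 1) + 1 = n - i := by omega
        have hstep := hd1 (n - (i + 1)) (by omega)
        rw [hj1] at hstep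
        rw [det_swap, hstep]; norm_num
      · intro i j hi hj hne
        exact hdist (n - i) (n - j) (Nat.sub_le n i) (Nat.sub_le n j) (by omega)
      · intro i h1 h2
        show 0 < 1 * (det (c (n - i)) y * det x (c (n - i)))
        have hj1 : 0 < n - i := by omega
        have hj2 : n - i < n := by omega
        have ha : 0 < det y (c (n - i)) := by
          have := hmono 0 (n - i) hj1 (le_of_lt hj2)
          rwa [h0, det_self] at this
        have hb : 0 < det (c (n - i)) x := hpos (n - i) hj1 hj2
        rw [det_swap (c (n - i)) y, det_swap x (c (n - i))]
        nlinarith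
      · intro i h1 h2
        have hj1 : 0 < n - i := by omega
        have hj2 : n - i < n := by omega
        obtain ⟨u, h3, h4, h5, _⟩ := hpart (n - i) hj1 hj2
        refine ⟨u, h3, ?_⟩
        rw [det_swap u y, det_swap x u]
        nlinarith
  · rcases hsplit with hd | hd
    · -- ε = -1, det x y ≥ 2 : reversed path for (y, -x)
      obtain ⟨n, c, hnpos, h0, hn, hu, hd1, hmono, hpos, hpart⟩ :=
        cons_core (det x y - 1).toNat y (-x) hy hxneg
          (by rw [det_neg_right, det_swap]; omega)
      have hdist := core_distinct n c y h0 hmono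
      have hx' : x = -c n := by rw [hn, neg_neg]
      refine ⟨n, fun i => if i = 0 then x else c (n - i), hnpos, ?_, ?_, ?_, ?_, ?_, ?_, ?_⟩
      · simp
      · show (if n = 0 then x else c (n - n)) = y
        rw [if_neg (by omega), Nat.sub_self, h0]
      · intro i hi
        by_cases h : i = 0
        · simp [h, hx]
        · show Int.gcd (if i = 0 then x else c (n - i)).1 (if i = 0 then x else c (n - i)).2 = 1
          rw [if_neg h]; exact hu (n - i) (Nat.sub_le n i)
      · intro i hi
        by_cases h : i = 0
        · subst h
          show |det (if (0:ℕ) = 0 then x else c (n - 0)) (if (1:ℕ) = 0 then x else c (n - 1))| = 1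
          rw [if_pos rfl, if_neg (by omega)]
          have hstep := hd1 (n - 1) (by omega)
          have : n - 1 + 1 = n := by omega
          rw [this] at hstep
          rw [hx', det_neg_left, det_swap (c n) (c (n - 1)), hstep]; norm_num
        · show |det (if i = 0 then x else c (n - i)) (if i + 1 = 0 then x else c (n - (i + 1)))| = 1
          rw [if_neg h, if_neg (by omega)]
          have hj1 : n - (i + 1) + 1 = n - i := by omega
          have hstep := hd1 (n - (i + 1)) (by omega)
          rw [hj1] at hstep
          rw [det_swap, hstep]; norm_num
      · intro i j hi hj hne
        apply pm_trans _ (c (n - i)) _ (c (n - j))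
        · by_cases h : i = 0
          · right
            show (if i = 0 then x else c (n - i)) = -c (n - i)
            rw [if_pos h, h, Nat.sub_zero]; exact hx'
          · left
            show (if i = 0 then x else c (n - i)) = c (n - i)
            rw [if_neg h]
        · by_cases h : j = 0
          · right
            show (if j = 0 then x else c (n - j)) = -c (n - j)
            rw [if_pos h, h, Nat.sub_zero]; exact hx'
          · left
            show (if j = 0 then x else c (n - j)) = c (n - j)
            rw [if_neg h]
        · exact (hdist (n - i) (n - j) (Nat.sub_le n i) (Nat.sub_le n j) (by omega)).1
        · exact (hdist (n - i) (n - j) (Nat.sub_le n i) (Nat.sub_le n j) (by omega)).2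
      · intro i h1 h2
        show 0 < (-1) * (det (if i = 0 then x else c (n - i)) y
            * det x (if i = 0 then x else c (n - i)))
        rw [if_neg (by omega)]
        have hj1 : 0 < n - i := by omega
        have hj2 : n - i < n := by omega
        have ha : 0 < det y (c (n - i)) := by
          have := hmono 0 (n - i) hj1 (le_of_lt hj2)
          rwa [h0, det_self] at this
        have hb : 0 < det (c (n - i)) (-x) := hpos (n - i) hj1 hj2
        rw [det_neg_right] at hb
        rw [det_swap (c (n - i)) y, det_swap x (c (n - i))]
        nlinarith
      · intro i h1 h2
        have hj1 : 0 < n - i := by omega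
        have hj2 : n - i < n := by omega
        obtain ⟨u, h3, h4, h5, _⟩ := hpart (n - i) hj1 hj2
        rw [det_neg_right] at h4
        refine ⟨u, ?_, ?_⟩
        · show |det (if i = 0 then x else c (n - i)) u| = 1
          rw [if_neg (by omega)]; exact h3
        · rw [det_swap u y, det_swap x u]
          nlinarith
    · -- ε = -1, det x y ≤ -2 : path for (x, -y)
      obtain ⟨n, c, hnpos, h0, hn, hu, hd1, hmono, hpos, hpart⟩ :=
        cons_core (det x (-y) - 1).toNat x (-y) hx hyneg (by rw [det_neg_right]; omega)
      have hdist := core_distinct n c x h0 hmono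
      have hy' : y = -c n := by rw [hn, neg_neg]
      refine ⟨n, fun i => if i = n then y else c i, hnpos, ?_, ?_, ?_, ?_, ?_, ?_, ?_⟩
      · show (if (0:ℕ) = n then y else c 0) = x
        rw [if_neg (by omega)]; exact h0
      · simp
      · intro i hi
        by_cases h : i = n
        · simp [h, hy]
        · show Int.gcd (if i = n then y else c i).1 (if i = n then y else c i).2 = 1
          rw [if_neg h]; exact hu i hi
      · intro i hi
        by_cases h : i + 1 = n
        · show |det (if i = n then y else c i) (if i + 1 = n then y else c (i + 1))| = 1
          rw [if_neg (by omega), if_pos h]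
          have hstep := hd1 i hi
          rw [h, hn, det_neg_right] at hstep
          have : det (c i) y = -1 := by omega
          rw [this]; norm_num
        · show |det (if i = n then y else c i) (if i + 1 = n then y else c (i + 1))| = 1
          rw [if_neg (by omega), if_neg h]
          rw [hd1 i hi]; norm_num
      · intro i j hi hj hne
        apply pm_trans _ (c i) _ (c j)
        · by_cases h : i = n
          · right
            show (if i = n then y else c i) = -c i
            rw [if_pos h, h]; exact hy'
          · left
            show (if i = n then y else c i) = c i
            rw [if_neg h]
        · by_cases h : j = n
          · right
            show (if j = n then y else c j) = -c j
            rw [if_pos h, h]; exact hy'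
          · left
            show (if j = n then y else c j) = c j
            rw [if_neg h]
        · exact (hdist i j hi hj hne).1
        · exact (hdist i j hi hj hne).2
      · intro i h1 h2
        show 0 < (-1) * (det (if i = n then y else c i) y * det x (if i = n then y else c i))
        rw [if_neg (by omega)]
        have ha : 0 < det (c i) (-y) := hpos i h1 h2
        rw [det_neg_right] at ha
        have hb : 0 < det x (c i) := by
          have := hmono 0 i h1 (le_of_lt h2)
          rwa [h0, det_self] at this
        nlinarith
      · intro i h1 h2
        obtain ⟨u, h3, h4, h5, _⟩ := hpart i h1 h2
        rw [det_neg_right] at h4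
        refine ⟨u, ?_, ?_⟩
        · show |det (if i = n then y else c i) u| = 1
          rw [if_neg (by omega)]; exact h3
        · nlinarith

lemma pm_eq_trans (P A B2 : ℤ × ℤ) (h1 : P = A ∨ P = -A) (h2 : P = B2 ∨ P = -B2) :
    A = B2 ∨ A = -B2 := by
  rcases h1 with rfl | rfl <;> rcases h2 with h | h
  · exact Or.inl h
  · exact Or.inr h
  · right; simpa using congrArg Neg.neg h
  · left; simpa using congrArg Neg.neg h


/-- Key claim in the proof of Theorem 1: if `p` is a shortest consistent path of sign `ε`
from `x` to `y` and `q` is any consistent path of sign `ε` from `x` to `y`, then every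
vertex of `p` occurs, up to sign, among the vertices of `q`. -/
theorem shortest_consistent_path_subset (x y : ℤ × ℤ)
    (hx : Int.gcd x.1 x.2 = 1) (hy : Int.gcd y.1 y.2 = 1)
    (hdet : 2 ≤ |det x y|) (ε : ℚ) (hε : ε = 1 ∨ ε = -1)
    (np : ℕ) (p : ℕ → ℤ × ℤ) (hp : IsConsistentPath x y ε np p)
    (hpmin : ∀ m w, IsConsistentPath x y ε m w → np ≤ m)
    (nq : ℕ) (q : ℕ → ℤ × ℤ) (hq : IsConsistentPath x y ε nq q) :
    ∀ i ≤ np, ∃ j ≤ nq, p i = q j ∨ p i = -q j := by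
    classical
  have hd0 : det x y ≠ 0 := by
    rcases abs_cases (det x y) with ⟨h1, h2⟩ | ⟨h1, h2⟩ <;> omega
  obtain ⟨ε', hε', hεε'⟩ : ∃ ε' : ℤ, (ε' = 1 ∨ ε' = -1) ∧ ε = (ε' : ℚ) := by
    rcases hε with rfl | rfl
    · exact ⟨1, Or.inl rfl, by norm_num⟩
    · exact ⟨-1, Or.inr rfl, by norm_num⟩
  obtain ⟨⟨hp0, hpn, hpu, hpd, hpdist⟩, hpc⟩ := hp
  obtain ⟨⟨hq0, hqn, hqu, hqd, hqdist⟩, hqc⟩ := hq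
  have hpc' : ∀ i, 0 < i → i < np → 0 < ε' * (det (p i) y * det x (p i)) :=
    fun i h1 h2 => (consis_char x y (p i) hd0 ε ε' hεε').mp (hpc i h1 h2)
  have hqc' : ∀ i, 0 < i → i < nq → 0 < ε' * (det (q i) y * det x (q i)) :=
    fun i h1 h2 => (consis_char x y (q i) hd0 ε ε' hεε').mp (hqc i h1 h2)
  obtain ⟨n, v, hnpos, hv0, hvn, hvu, hvd, hvdist, hvc, hvpart⟩ :=
    cons_all x y hx hy hdet ε' hε'
  have hvcons : IsConsistentPath x y ε n v :=
    ⟨⟨hv0, hvn, hvu, hvd, hvdist⟩,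
      fun i h1 h2 => (consis_char x y (v i) hd0 ε ε' hεε').mpr (hvc i h1 h2)⟩
  have hnp_le : np ≤ n := hpmin n v hvcons
  have hInP : ∀ l, 0 < l → l < n → ∃ j, 0 < j ∧ j < np ∧ (p j = v l ∨ p j = -(v l)) := by
    intro l h1 h2
    obtain ⟨u, hu1, hu2⟩ := hvpart l h1 h2
    exact mandatory_mem x y ε' np p hp0 hpn hpu hpd hpc' (v l) u hu1 (hvc l h1 h2) hu2
  have hInQ : ∀ l, 0 < l → l < n → ∃ j, 0 < j ∧ j < nq ∧ (q j = v l ∨ q j = -(v l)) := by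
    intro l h1 h2
    obtain ⟨u, hu1, hu2⟩ := hvpart l h1 h2
    exact mandatory_mem x y ε' nq q hq0 hqn hqu hqd hqc' (v l) u hu1 (hvc l h1 h2) hu2
  have hInP' : ∀ l : ℕ, ∃ j, 0 < l → l < n →
      0 < j ∧ j < np ∧ (p j = v l ∨ p j = -(v l)) := by
    intro l
    by_cases h : 0 < l ∧ l < n
    · obtain ⟨j, hj⟩ := hInP l h.1 h.2
      exact ⟨j, fun _ _ => hj⟩
    · exact ⟨0, fun h1 h2 => absurd ⟨h1, h2⟩ h⟩
  choose ψ hψ using hInP'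
  -- surjectivity of ψ from (interior of v) onto (interior of p)
  intro i hi
  rcases Nat.eq_zero_or_pos i with rfl | hipos
  · exact ⟨0, Nat.zero_le nq, Or.inl (by rw [hp0, hq0])⟩
  rcases eq_or_lt_of_le hi with rfl | hilt
  · exact ⟨nq, le_rfl, Or.inl (by rw [hpn, hqn])⟩
  -- now 0 < i < np
  have hsurj := Finset.surj_on_of_inj_on_of_card_le
    (s := Finset.Icc 1 (n - 1)) (t := Finset.Icc 1 (np - 1))
    (fun l _ => ψ l)
    (by
      intro a ha
      simp only [Finset.mem_Icc] at ha ⊢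
      have := hψ a (by omega) (by omega)
      omega)
    (by
      intro a₁ a₂ ha₁ ha₂ heq
      simp only [Finset.mem_Icc] at ha₁ ha₂
      have heq' : ψ a₁ = ψ a₂ := heq
      have h1 := hψ a₁ (by omega) (by omega)
      have h2 := hψ a₂ (by omega) (by omega)
      by_contra hne
      have hvv := hvdist a₁ a₂ (by omega) (by omega) hne
      have := pm_eq_trans (p (ψ a₁)) (v a₁) (v a₂) h1.2.2 (heq' ▸ h2.2.2)
      rcases this with h | h
      · exact hvv.1 h
      · exact hvv.2 h)
    (by
      rw [Nat.card_Icc, Nat.card_Icc]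
      omega)
  obtain ⟨a, ha, hai⟩ := hsurj i (by rw [Finset.mem_Icc]; omega)
  simp only [Finset.mem_Icc] at ha
  have hai' : i = ψ a := hai
  have hpa := hψ a (by omega) (by omega)
  obtain ⟨j, hj1, hj2, hj3⟩ := hInQ a (by omega) (by omega)
  refine ⟨j, by omega, ?_⟩
  rw [hai']
  have := pm_eq_trans (v a) (p (ψ a)) (q j)
    (by rcases hpa.2.2 with h | h
        · exact Or.inl h.symm
        · right; rw [h, neg_neg])
    (by rcases hj3 with h | h
        · exact Or.inl h.symm
        · right; rw [h, neg_neg])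
  rcases this with h | h
  · exact Or.inl h
  · exact Or.inr h
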